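/- Define φ₁(x) = ∫_{S^{n-1}} e^{x·ω} dω for x ∈ ℝⁿ, n ≥ 2. Then there is a constant C > 0 such that 0 < φ₁(x) ≤ C e^{|x|} (1+|x|)^{-(n-1)/2} for all x ∈ ℝⁿ. -/

import Mathlib

open Real MeasureTheory RealInnerProductSpace
open Pointwise Set
open scoped ENNReal NNReal

lemma exists_onb (n : ℕ) (u : EuclideanSpace ℝ (Fin n)) (hu : ‖u‖ = 1) (hn : 1 ≤ n) :
    ∃ b : OrthonormalBasis (Fin n) ℝ (EuclideanSpace ℝ (Fin n)), b ⟨0, hn⟩ = u := by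
  have hcard : Module.finrank ℝ (EuclideanSpace ℝ (Fin n)) = Fintype.card (Fin n) := by
    simp [finrank_euclideanSpace_fin]
  have hv : Orthonormal ℝ (Set.restrict {(⟨0, hn⟩ : Fin n)} fun _ => u) := by
    constructor
    · intro i; simpa [Set.restrict] using congrArg (fun t : ℝ => t) (by
        rw [show ‖u‖ = 1 from hu])
    · intro i j hij
      exact absurd (Subsingleton.elim i j) hij
  obtain ⟨b, hb⟩ := hv.exists_orthonormalBasis_extension_of_card_eq hcard
  exact ⟨b, hb _ rfl⟩

lemma cap_bound (n : ℕ) (hn : 2 ≤ n) (u : EuclideanSpace ℝ (Fin n)) (hu : ‖u‖ = 1)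
    (t : ℝ) (ht : 0 < t) :
    (volume : Measure (EuclideanSpace ℝ (Fin n))).toSphere
        {ω : Metric.sphere (0 : EuclideanSpace ℝ (Fin n)) 1 |
          1 - t < ⟪u, (ω : EuclideanSpace ℝ (Fin n))⟫}
      ≤ ENNReal.ofReal ((n : ℝ) * 2 ^ n * (2 * t) ^ (((n : ℝ) - 1) / 2)) := by
  have hn1 : 1 ≤ n := le_trans (by norm_num) hn
  obtain ⟨b, hb0⟩ := exists_onb n u hu hn1
  set z : Fin n := ⟨0, hn1⟩
  -- the cap set
  set s : Set (Metric.sphere (0 : EuclideanSpace ℝ (Fin n)) 1) :=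
    {ω | 1 - t < ⟪u, (ω : EuclideanSpace ℝ (Fin n))⟫} with hs
  have hmeas : MeasurableSet s := by
    have : IsOpen s := by
      have hc : Continuous fun ω : Metric.sphere (0 : EuclideanSpace ℝ (Fin n)) 1 =>
          ⟪u, (ω : EuclideanSpace ℝ (Fin n))⟫ :=
        Continuous.inner continuous_const continuous_subtype_val
      exact isOpen_Ioi.preimage hc
    exact this.measurableSet
  rw [Measure.toSphere_apply' _ hmeas]
  -- bound the cone volume
  set c : Fin n → ℝ := fun i => if i = z then 1 else Real.sqrt (2 * t) with hc
  have hbox : Ioo (0:ℝ) 1 • ((↑) '' s) ⊆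
      ⇑b.repr ⁻¹' (WithLp.ofLp ⁻¹' (Set.pi Set.univ fun i => Icc (-(c i)) (c i))) := by
    rintro y hy
    rw [Set.mem_smul] at hy
    obtain ⟨r, hr, w, hw, rfl⟩ := hy
    obtain ⟨ω, hω, rfl⟩ := hw
    intro i _
    have hrepr : ∀ j, b.repr (r • (ω : EuclideanSpace ℝ (Fin n))) j
        = ⟪b j, r • (ω : EuclideanSpace ℝ (Fin n))⟫ := fun j => b.repr_apply_apply _ j
    have hnω : ‖(ω : EuclideanSpace ℝ (Fin n))‖ = 1 := by
      simpa using mem_sphere_zero_iff_norm.1 ω.2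
    have hny : ‖r • (ω : EuclideanSpace ℝ (Fin n))‖ ≤ 1 := by
      rw [norm_smul, hnω, mul_one]
      exact le_of_lt (by simpa [abs_of_pos hr.1] using hr.2)
    have ha1 : |⟪u, (ω : EuclideanSpace ℝ (Fin n))⟫| ≤ 1 := by
      simpa [hu, hnω] using abs_real_inner_le_norm u (ω : EuclideanSpace ℝ (Fin n))
    have hat : 1 - t < ⟪u, (ω : EuclideanSpace ℝ (Fin n))⟫ := hω
    by_cases hi : i = z
    · subst hi
      rw [mem_Icc, ← abs_le, hrepr, hb0]
      calc |⟪u, r • (ω : EuclideanSpace ℝ (Fin n))⟫| ≤ ‖u‖ * ‖r • (ω : EuclideanSpace ℝ (Fin n))‖ :=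
            abs_real_inner_le_norm _ _
        _ ≤ 1 := by rw [hu, one_mul]; exact hny
      -- c i = 1 handled by simp? need to rewrite c
    · -- perpendicular coordinate
      have key : (b.repr (r • (ω : EuclideanSpace ℝ (Fin n))) i) ^ 2
          + (b.repr (r • (ω : EuclideanSpace ℝ (Fin n))) z) ^ 2
          ≤ ‖r • (ω : EuclideanSpace ℝ (Fin n))‖ ^ 2 := by
        have hsum : ‖r • (ω : EuclideanSpace ℝ (Fin n))‖ ^ 2
            = ∑ j, (b.repr (r • (ω : EuclideanSpace ℝ (Fin n))) j) ^ 2 := by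
          rw [← b.repr.norm_map]
          rw [EuclideanSpace.norm_eq]
          rw [Real.sq_sqrt (by positivity)]
          congr 1; ext j; rw [Real.norm_eq_abs, sq_abs]
        rw [hsum]
        have := Finset.sum_le_univ_sum_of_nonneg (s := {i, z})
          (f := fun j => (b.repr (r • (ω : EuclideanSpace ℝ (Fin n))) j) ^ 2)
          (fun j => sq_nonneg _)
        rwa [Finset.sum_pair hi] at this
      have hinner : b.repr (r • (ω : EuclideanSpace ℝ (Fin n))) z
          = r * ⟪u, (ω : EuclideanSpace ℝ (Fin n))⟫ := by
        rw [hrepr, hb0, real_inner_smul_right]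
      have hsq : (b.repr (r • (ω : EuclideanSpace ℝ (Fin n))) i) ^ 2 ≤ 2 * t := by
        have hn2 : ‖r • (ω : EuclideanSpace ℝ (Fin n))‖ ^ 2 = r ^ 2 := by
          rw [norm_smul, hnω, mul_one, Real.norm_eq_abs, sq_abs]
        rw [hn2, hinner] at key
        have h1 : r ^ 2 * (1 - ⟪u, (ω : EuclideanSpace ℝ (Fin n))⟫ ^ 2) ≤ 2 * t := by
          set a := ⟪u, (ω : EuclideanSpace ℝ (Fin n))⟫
          have ha1' : -1 ≤ a := neg_le_of_abs_le ha1
          have ha2' : a ≤ 1 := le_of_abs_le ha1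
          have hr1 : 0 < r := hr.1
          have hr2 : r < 1 := hr.2
          have h2 : (1 - a) * (1 + a) ≤ t * 2 :=
            mul_le_mul (by linarith) (by linarith) (by linarith) ht.le
          nlinarith [h2, sq_nonneg a, mul_nonneg hr1.le hr1.le,
            mul_le_one₀ (by linarith : r ≤ 1) hr1.le (by linarith : r ≤ 1)]
        nlinarith [key]
      have : |b.repr (r • (ω : EuclideanSpace ℝ (Fin n))) i| ≤ Real.sqrt (2 * t) :=
        abs_le_sqrt hsq
      rw [mem_Icc, ← abs_le]
      simpa [hc, hi] using this
  -- measure of the box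
  have hboxmeas : MeasurableSet (Set.pi Set.univ fun i => Icc (-(c i)) (c i)) :=
    MeasurableSet.univ_pi fun i => measurableSet_Icc
  have hvol : (volume : Measure (EuclideanSpace ℝ (Fin n)))
      (⇑b.repr ⁻¹' (WithLp.ofLp ⁻¹' (Set.pi Set.univ fun i => Icc (-(c i)) (c i))))
      = ∏ i, ENNReal.ofReal (c i - (-(c i))) := by
    rw [b.measurePreserving_repr.measure_preimage
      (hboxmeas.preimage (WithLp.measurable_ofLp _ _)).nullMeasurableSet]
    have h1 : (volume : Measure (EuclideanSpace ℝ (Fin n)))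
        (WithLp.ofLp ⁻¹'
          (Set.pi Set.univ fun i => Icc (-(c i)) (c i)))
        = (volume : Measure (∀ _ : Fin n, ℝ)) (Set.pi Set.univ fun i => Icc (-(c i)) (c i)) :=
      (PiLp.volume_preserving_ofLp (Fin n)).measure_preimage
        hboxmeas.nullMeasurableSet
    rw [h1, volume_pi_pi]
    exact Finset.prod_congr rfl fun i _ => Real.volume_Icc
  have hprod : (∏ i, ENNReal.ofReal (c i - (-(c i))))
      = ENNReal.ofReal 2 * ENNReal.ofReal (2 * Real.sqrt (2 * t)) ^ (n - 1) := by
    rw [← Finset.mul_prod_erase Finset.univ _ (Finset.mem_univ z)]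
    have : ∀ i ∈ Finset.univ.erase z,
        ENNReal.ofReal (c i - (-(c i))) = ENNReal.ofReal (2 * Real.sqrt (2 * t)) := by
      intro i hi
      have hiz : i ≠ z := (Finset.mem_erase.1 hi).1
      simp only [hc, hiz, if_false]; congr 1; ring
    rw [Finset.prod_congr rfl this, Finset.prod_const, Finset.card_erase_of_mem (Finset.mem_univ z),
      Finset.card_univ, Fintype.card_fin]
    congr 1
    simp [hc]; ring_nf
  rw [finrank_euclideanSpace_fin]
  refine le_trans (mul_le_mul_right ((measure_mono hbox).trans_eq (hvol.trans hprod)) _) ?_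
  -- arithmetic
  have h2t : (0:ℝ) ≤ 2 * t := by positivity
  have hb : (0:ℝ) ≤ 2 * Real.sqrt (2 * t) := by positivity
  rw [← ENNReal.ofReal_pow hb, ← ENNReal.ofReal_mul (by norm_num : (0:ℝ) ≤ 2),
    ← ENNReal.ofReal_natCast n, ← ENNReal.ofReal_mul (Nat.cast_nonneg n)]
  refine ENNReal.ofReal_le_ofReal ?_
  have hsq : Real.sqrt (2 * t) ^ (n - 1) = (2 * t) ^ (((n:ℝ) - 1) / 2) := by
    rw [Real.sqrt_eq_rpow, ← Real.rpow_natCast ((2 * t) ^ (1/2 : ℝ)) (n - 1),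
      ← Real.rpow_mul h2t]
    congr 1
    rw [Nat.cast_sub hn1]
    push_cast; ring
  rw [mul_pow, hsq]
  have h2 : (2:ℝ) * 2 ^ (n - 1) = 2 ^ n := by
    rw [← pow_succ']
    congr 1; omega
  exact le_of_eq (by rw [← h2]; ring)

/-- The function `φ₁(x) = ∫_{S^{n-1}} e^{x·ω} dω`, integrating over the unit
sphere in `ℝⁿ` with its surface measure. -/
noncomputable def phi1 (n : ℕ) (x : EuclideanSpace ℝ (Fin n)) : ℝ :=
  ∫ ω : Metric.sphere (0 : EuclideanSpace ℝ (Fin n)) 1,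
    Real.exp ⟪x, (ω : EuclideanSpace ℝ (Fin n))⟫ ∂((volume : Measure (EuclideanSpace ℝ (Fin n))).toSphere)

set_option maxHeartbeats 1000000 in
theorem stmt_7 (n : ℕ) (hn : 2 ≤ n) :
    ∃ C > (0:ℝ), ∀ x : EuclideanSpace ℝ (Fin n),
      0 < phi1 n x ∧
      phi1 n x ≤ C * Real.exp ‖x‖ * (1 + ‖x‖) ^ (-((n:ℝ) - 1) / 2) := by
  have hn1 : (1:ℝ) ≤ (n:ℝ) := by exact_mod_cast le_trans (by norm_num) hn
  set p : ℝ := ((n:ℝ) - 1) / 2 with hp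
  have hp0 : 0 ≤ p := by rw [hp]; linarith
  -- summability of the series
  have hw : Summable (fun k : ℕ => ((k:ℝ) + 1) ^ n * Real.exp (-1) ^ k) := by
    have h1 : ‖Real.exp (-1)‖ < 1 := by
      rw [Real.norm_eq_abs, abs_of_pos (Real.exp_pos _)]
      exact Real.exp_lt_one_iff.2 (by norm_num)
    have h2 : Summable (fun k : ℕ => (k:ℝ) ^ n * Real.exp (-1) ^ k) :=
      summable_pow_mul_geometric_of_norm_lt_one n h1
    have h3 : Summable (fun k : ℕ => ((k + 1 : ℕ):ℝ) ^ n * Real.exp (-1) ^ (k + 1)) :=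
      (summable_nat_add_iff 1).2 h2
    have h4 : Summable (fun k : ℕ => (Real.exp (-1))⁻¹ *
        (((k + 1 : ℕ):ℝ) ^ n * Real.exp (-1) ^ (k + 1))) := h3.mul_left _
    refine h4.congr fun k => ?_
    have he : Real.exp (-1) ≠ 0 := (Real.exp_pos _).ne'
    push_cast
    rw [pow_succ, show (Real.exp (-1))⁻¹ * (((k:ℝ) + 1) ^ n * (Real.exp (-1) ^ k * Real.exp (-1)))
        = ((k:ℝ) + 1) ^ n * Real.exp (-1) ^ k * ((Real.exp (-1))⁻¹ * Real.exp (-1)) from by ring,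
      inv_mul_cancel₀ he, mul_one]
  set S : ℝ := ∑' k : ℕ, ((k:ℝ) + 1) ^ n * Real.exp (-1) ^ k with hS
  have hS0 : 0 ≤ S := tsum_nonneg fun k => by positivity
  set σ := (volume : Measure (EuclideanSpace ℝ (Fin n))).toSphere with hσ
  set M : ℝ := (σ Set.univ).toReal with hM
  have hσuniv : σ Set.univ = (n : ℝ≥0∞) * volume (Metric.ball (0 : EuclideanSpace ℝ (Fin n)) 1) := by
    rw [hσ, Measure.toSphere_apply_univ, finrank_euclideanSpace_fin]
  have hσ0 : σ Set.univ ≠ 0 := by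
    rw [hσuniv]
    exact mul_ne_zero (Nat.cast_ne_zero.2 (by omega)) (Metric.measure_ball_pos _ _ one_pos).ne'
  have hσtop : σ Set.univ ≠ ⊤ := measure_ne_top _ _
  have hM0 : 0 < M := ENNReal.toReal_pos hσ0 hσtop
  set K : ℝ := (n:ℝ) * 2 ^ n with hK
  have hK0 : 0 < K := by positivity
  set C : ℝ := M * 2 ^ p + K * 4 ^ p * S + 1 with hC
  have hCpos : 0 < C := by
    have : (0:ℝ) ≤ M * 2 ^ p := by positivity
    have : (0:ℝ) ≤ K * 4 ^ p * S := by positivity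
    linarith
  refine ⟨C, hCpos, fun x => ?_⟩
  set r : ℝ := ‖x‖ with hr
  have hr0 : 0 ≤ r := norm_nonneg x
  -- basic facts about the integrand
  have hcont : Continuous fun ω : Metric.sphere (0 : EuclideanSpace ℝ (Fin n)) 1 =>
      Real.exp ⟪x, (ω : EuclideanSpace ℝ (Fin n))⟫ :=
    Real.continuous_exp.comp (Continuous.inner continuous_const continuous_subtype_val)
  have hphi : phi1 n x = (∫⁻ ω, ENNReal.ofReal
      (Real.exp ⟪x, (ω : EuclideanSpace ℝ (Fin n))⟫) ∂σ).toReal := by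
    rw [phi1, integral_eq_lintegral_of_nonneg_ae
      (Filter.Eventually.of_forall fun ω => (Real.exp_pos _).le) hcont.aestronglyMeasurable]
  have hinner_le : ∀ ω : Metric.sphere (0 : EuclideanSpace ℝ (Fin n)) 1,
      |⟪x, (ω : EuclideanSpace ℝ (Fin n))⟫| ≤ r := by
    intro ω
    have hnω : ‖(ω : EuclideanSpace ℝ (Fin n))‖ = 1 := by
      simpa using mem_sphere_zero_iff_norm.1 ω.2
    calc |⟪x, (ω : EuclideanSpace ℝ (Fin n))⟫| ≤ ‖x‖ * ‖(ω : EuclideanSpace ℝ (Fin n))‖ :=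
          abs_real_inner_le_norm _ _
      _ = r := by rw [hnω, mul_one]
  have hub : (∫⁻ ω, ENNReal.ofReal
      (Real.exp ⟪x, (ω : EuclideanSpace ℝ (Fin n))⟫) ∂σ) ≤ ENNReal.ofReal (Real.exp r) * σ Set.univ := by
    calc (∫⁻ ω, ENNReal.ofReal (Real.exp ⟪x, (ω : EuclideanSpace ℝ (Fin n))⟫) ∂σ)
        ≤ ∫⁻ _, ENNReal.ofReal (Real.exp r) ∂σ :=
          lintegral_mono fun ω => ENNReal.ofReal_le_ofReal
            (Real.exp_le_exp.2 (le_of_abs_le (hinner_le ω)))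
      _ = ENNReal.ofReal (Real.exp r) * σ Set.univ := by rw [lintegral_const]
  have hlb : ENNReal.ofReal (Real.exp (-r)) * σ Set.univ ≤ (∫⁻ ω, ENNReal.ofReal
      (Real.exp ⟪x, (ω : EuclideanSpace ℝ (Fin n))⟫) ∂σ) := by
    calc ENNReal.ofReal (Real.exp (-r)) * σ Set.univ
        = ∫⁻ _, ENNReal.ofReal (Real.exp (-r)) ∂σ := by rw [lintegral_const]
      _ ≤ _ := lintegral_mono fun ω => ENNReal.ofReal_le_ofReal
            (Real.exp_le_exp.2 (neg_le_of_abs_le (hinner_le ω)))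
  have hpos : 0 < phi1 n x := by
    rw [hphi]
    refine ENNReal.toReal_pos (fun h0 => ?_) (fun htop => ?_)
    · rw [h0] at hlb
      have := le_zero_iff.1 hlb
      rw [mul_eq_zero] at this
      rcases this with h | h
      · exact absurd h (by simp [ENNReal.ofReal_eq_zero, not_le.2 (Real.exp_pos (-r))])
      · exact hσ0 h
    · rw [htop] at hub
      exact (ENNReal.mul_lt_top ENNReal.ofReal_lt_top hσtop.lt_top).ne (top_le_iff.1 hub)
  refine ⟨hpos, ?_⟩
  have hexp_neg : -((n:ℝ) - 1) / 2 = -p := by rw [hp]; ring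
  rw [hexp_neg]
  by_cases hx1 : r ≤ 1
  · -- small x
    have hbase : (0:ℝ) < 1 + r := by linarith
    have h2p : (1 + r) ^ p ≤ 2 ^ p := Real.rpow_le_rpow (by linarith) (by linarith) hp0
    have hinv : ((2:ℝ) ^ p)⁻¹ ≤ (1 + r) ^ (-p) := by
      rw [Real.rpow_neg hbase.le]
      exact inv_anti₀ (Real.rpow_pos_of_pos hbase p) h2p
    have hMC : M * 2 ^ p ≤ C := by
      have h1 : (0:ℝ) ≤ K * 4 ^ p * S := by positivity
      rw [hC]; linarith
    have key : M ≤ C * (1 + r) ^ (-p) := by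
      have h2 : (0:ℝ) < (2:ℝ) ^ p := by positivity
      calc M = (M * 2 ^ p) * ((2:ℝ) ^ p)⁻¹ := by field_simp
        _ ≤ C * (1 + r) ^ (-p) :=
          mul_le_mul hMC hinv (by positivity) hCpos.le
    have hup : phi1 n x ≤ Real.exp r * M := by
      rw [hphi]
      refine ENNReal.toReal_le_of_le_ofReal (by positivity) ?_
      refine hub.trans ?_
      rw [ENNReal.ofReal_mul (Real.exp_pos r).le]
      exact mul_le_mul_right (le_of_eq (ENNReal.ofReal_toReal hσtop).symm) _
    calc phi1 n x ≤ Real.exp r * M := hup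
      _ ≤ Real.exp r * (C * (1 + r) ^ (-p)) :=
          mul_le_mul_of_nonneg_left key (Real.exp_pos r).le
      _ = C * Real.exp r * (1 + r) ^ (-p) := by ring
  · -- large x
    push_neg at hx1
    have hrpos : (0:ℝ) < r := lt_trans one_pos hx1
    set u : EuclideanSpace ℝ (Fin n) := r⁻¹ • x with hux
    have hu : ‖u‖ = 1 := by
      rw [hux, norm_smul, norm_inv, Real.norm_eq_abs, abs_of_pos hrpos, ← hr,
        inv_mul_cancel₀ hrpos.ne']
    set A : ℕ → Set (Metric.sphere (0 : EuclideanSpace ℝ (Fin n)) 1) :=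
      fun k => {ω | 1 - ((k:ℝ) + 1) / r < ⟪u, (ω : EuclideanSpace ℝ (Fin n))⟫} with hA
    have hAmeas : ∀ k, MeasurableSet (A k) := by
      intro k
      have heq : A k = (fun ω : Metric.sphere (0 : EuclideanSpace ℝ (Fin n)) 1 =>
          ⟪u, (ω : EuclideanSpace ℝ (Fin n))⟫) ⁻¹' Set.Ioi (1 - ((k:ℝ) + 1) / r) := rfl
      rw [heq]
      exact (isOpen_Ioi.preimage
        (Continuous.inner continuous_const continuous_subtype_val)).measurableSet
    have hinner_u : ∀ ω : Metric.sphere (0 : EuclideanSpace ℝ (Fin n)) 1,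
        ⟪u, (ω : EuclideanSpace ℝ (Fin n))⟫ = r⁻¹ * ⟪x, (ω : EuclideanSpace ℝ (Fin n))⟫ :=
      fun ω => real_inner_smul_left _ _ _
    have hpt : ∀ ω : Metric.sphere (0 : EuclideanSpace ℝ (Fin n)) 1,
        ENNReal.ofReal (Real.exp ⟪x, (ω : EuclideanSpace ℝ (Fin n))⟫) ≤
        ∑' k : ℕ, Set.indicator (A k) (fun _ => ENNReal.ofReal (Real.exp (r - k))) ω := by
      intro ω
      set g : ℝ := r - ⟪x, (ω : EuclideanSpace ℝ (Fin n))⟫ with hg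
      have hg0 : 0 ≤ g := by
        have := le_of_abs_le (hinner_le ω); rw [hg]; linarith
      set k := ⌊g⌋₊ with hk
      have hgk : g < k + 1 := Nat.lt_floor_add_one g
      have hkg : (k:ℝ) ≤ g := Nat.floor_le hg0
      have hmem : ω ∈ A k := by
        show 1 - ((k:ℝ) + 1) / r < ⟪u, (ω : EuclideanSpace ℝ (Fin n))⟫
        rw [hinner_u ω]
        have h1 : r⁻¹ * (r - ((k:ℝ) + 1)) < r⁻¹ * ⟪x, (ω : EuclideanSpace ℝ (Fin n))⟫ :=
          mul_lt_mul_of_pos_left (by rw [hg] at hgk; linarith) (inv_pos.2 hrpos)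
        calc 1 - ((k:ℝ) + 1) / r = r⁻¹ * (r - ((k:ℝ) + 1)) := by field_simp
          _ < _ := h1
      calc ENNReal.ofReal (Real.exp ⟪x, (ω : EuclideanSpace ℝ (Fin n))⟫)
          ≤ ENNReal.ofReal (Real.exp (r - k)) :=
            ENNReal.ofReal_le_ofReal (Real.exp_le_exp.2 (by rw [hg] at hkg; linarith))
        _ = Set.indicator (A k) (fun _ => ENNReal.ofReal (Real.exp (r - k))) ω :=
            (Set.indicator_of_mem hmem
              (fun _ => ENNReal.ofReal (Real.exp (r - (k:ℝ))))).symm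
        _ ≤ ∑' j : ℕ, Set.indicator (A j) (fun _ => ENNReal.ofReal (Real.exp (r - j))) ω :=
            ENNReal.le_tsum k
    have hmain : (∫⁻ ω, ENNReal.ofReal (Real.exp ⟪x, (ω : EuclideanSpace ℝ (Fin n))⟫) ∂σ)
        ≤ ∑' k : ℕ, ENNReal.ofReal (Real.exp (r - k)) * σ (A k) := by
      calc (∫⁻ ω, ENNReal.ofReal (Real.exp ⟪x, (ω : EuclideanSpace ℝ (Fin n))⟫) ∂σ)
          ≤ ∫⁻ ω, ∑' k : ℕ, Set.indicator (A k)
              (fun _ => ENNReal.ofReal (Real.exp (r - k))) ω ∂σ := lintegral_mono hpt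
        _ = ∑' k : ℕ, ∫⁻ ω, Set.indicator (A k)
              (fun _ => ENNReal.ofReal (Real.exp (r - k))) ω ∂σ :=
            lintegral_tsum fun k => (measurable_const.indicator (hAmeas k)).aemeasurable
        _ = ∑' k : ℕ, ENNReal.ofReal (Real.exp (r - k)) * σ (A k) := by
            refine tsum_congr fun k => ?_
            rw [lintegral_indicator_const (hAmeas k)]
    have hcap : ∀ k : ℕ, σ (A k) ≤ ENNReal.ofReal (K * (2 * (((k:ℝ) + 1) / r)) ^ p) := by
      intro k
      exact cap_bound n hn u hu (((k:ℝ) + 1) / r) (by positivity)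
    set D : ℝ := Real.exp r * (1 + r) ^ (-p) * (K * 4 ^ p) with hD
    have hD0 : 0 ≤ D := by
      rw [hD]
      have : (0:ℝ) ≤ (1 + r) ^ (-p) := Real.rpow_nonneg (by linarith) _
      positivity
    have hterm : ∀ k : ℕ, Real.exp (r - k) * (K * (2 * (((k:ℝ) + 1) / r)) ^ p)
        ≤ D * (((k:ℝ) + 1) ^ n * Real.exp (-1) ^ k) := by
      intro k
      have hk1 : (0:ℝ) < (k:ℝ) + 1 := by positivity
      have hbase : 2 * (((k:ℝ) + 1) / r) ≤ (4 * ((k:ℝ) + 1)) / (1 + r) := by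
        rw [mul_div_assoc', div_le_div_iff₀ hrpos (by linarith : (0:ℝ) < 1 + r)]
        nlinarith
      have hrp : (2 * (((k:ℝ) + 1) / r)) ^ p ≤ ((4 * ((k:ℝ) + 1)) / (1 + r)) ^ p :=
        Real.rpow_le_rpow (by positivity) hbase hp0
      have hsplit : ((4 * ((k:ℝ) + 1)) / (1 + r)) ^ p
          = 4 ^ p * ((k:ℝ) + 1) ^ p * (1 + r) ^ (-p) := by
        rw [Real.div_rpow (by positivity) (by linarith),
          Real.mul_rpow (by norm_num) (by positivity), Real.rpow_neg (by linarith),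
          div_eq_mul_inv]
      have hkp : ((k:ℝ) + 1) ^ p ≤ ((k:ℝ) + 1) ^ (n:ℕ) := by
        rw [← Real.rpow_natCast ((k:ℝ) + 1) n]
        exact Real.rpow_le_rpow_of_exponent_le (by linarith)
          (by rw [hp]; push_cast; linarith)
      have hBB : (2 * (((k:ℝ) + 1) / r)) ^ p ≤ 4 ^ p * ((k:ℝ) + 1) ^ n * (1 + r) ^ (-p) := by
        refine hrp.trans ?_
        rw [hsplit]
        have h1 : (0:ℝ) ≤ (1 + r) ^ (-p) := Real.rpow_nonneg (by linarith) _
        have h4 : (0:ℝ) ≤ (4:ℝ) ^ p := Real.rpow_nonneg (by norm_num) _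
        have := mul_le_mul_of_nonneg_left hkp h4
        exact mul_le_mul_of_nonneg_right this h1
      have hexp : Real.exp (r - k) = Real.exp r * Real.exp (-1) ^ k := by
        rw [sub_eq_add_neg, Real.exp_add,
          show -(k:ℝ) = (k:ℝ) * (-1) by ring, Real.exp_nat_mul]
      calc Real.exp (r - k) * (K * (2 * (((k:ℝ) + 1) / r)) ^ p)
          ≤ Real.exp (r - k) * (K * (4 ^ p * ((k:ℝ) + 1) ^ n * (1 + r) ^ (-p))) := by
            exact mul_le_mul_of_nonneg_left (mul_le_mul_of_nonneg_left hBB hK0.le)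
              (Real.exp_pos _).le
        _ = D * (((k:ℝ) + 1) ^ n * Real.exp (-1) ^ k) := by rw [hexp, hD]; ring
    have hDS : ∑' k : ℕ, D * (((k:ℝ) + 1) ^ n * Real.exp (-1) ^ k) = D * S := by
      rw [hS]; exact tsum_mul_left
    have hsum : ∑' k : ℕ, ENNReal.ofReal (Real.exp (r - k)) * σ (A k)
        ≤ ENNReal.ofReal (D * S) := by
      calc ∑' k : ℕ, ENNReal.ofReal (Real.exp (r - k)) * σ (A k)
          ≤ ∑' k : ℕ, ENNReal.ofReal (Real.exp (r - k))
              * ENNReal.ofReal (K * (2 * (((k:ℝ) + 1) / r)) ^ p) :=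
            ENNReal.tsum_le_tsum fun k => mul_le_mul_right (hcap k) _
        _ = ∑' k : ℕ, ENNReal.ofReal (Real.exp (r - k) * (K * (2 * (((k:ℝ) + 1) / r)) ^ p)) := by
            refine tsum_congr fun k => ?_
            rw [← ENNReal.ofReal_mul (Real.exp_pos _).le]
        _ ≤ ∑' k : ℕ, ENNReal.ofReal (D * (((k:ℝ) + 1) ^ n * Real.exp (-1) ^ k)) :=
            ENNReal.tsum_le_tsum fun k => ENNReal.ofReal_le_ofReal (hterm k)
        _ = ENNReal.ofReal (∑' k : ℕ, D * (((k:ℝ) + 1) ^ n * Real.exp (-1) ^ k)) :=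
            (ENNReal.ofReal_tsum_of_nonneg
              (fun k => mul_nonneg hD0 (by positivity)) (hw.mul_left D)).symm
        _ = ENNReal.ofReal (D * S) := by rw [hDS]
    rw [hphi]
    refine le_trans (ENNReal.toReal_le_of_le_ofReal (mul_nonneg hD0 hS0)
      (le_trans hmain hsum)) ?_
    have hKC : K * 4 ^ p * S ≤ C := by
      have h1 : (0:ℝ) ≤ M * 2 ^ p := by positivity
      rw [hC]; linarith
    have hexpnn : (0:ℝ) ≤ Real.exp r * (1 + r) ^ (-p) :=
      mul_nonneg (Real.exp_pos _).le (Real.rpow_nonneg (by linarith) _)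
    calc D * S = (K * 4 ^ p * S) * (Real.exp r * (1 + r) ^ (-p)) := by rw [hD]; ring
      _ ≤ C * (Real.exp r * (1 + r) ^ (-p)) := mul_le_mul_of_nonneg_right hKC hexpnn
      _ = C * Real.exp r * (1 + r) ^ (-p) := by ring
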